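/- arXiv:2311.18638 — 2 statements merged into one kernel-verified Lean document; each statement's English description precedes it below -/
import Mathlib

section
/- If I is a semiprime thick ideal of K (an intersection of prime thick ideals) whose support Φ_V(I) = {P ∈ Spc K : I ⊄ P} is G-invariant, then I is a G-ideal (i.e., T_g I ⊆ I for all g ∈ G). -/
open CategoryTheory Category Limits Pretriangulated MonoidalCategory ZeroObject

universe v u

variable (K : Type u) [Category.{v} K] [Preadditive K] [HasZeroObject K]
  [MonoidalCategory K] [HasShift K ℤ] [∀ n : ℤ, (shiftFunctor K n).Additive]
  [Pretriangulated K]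

/-- A (two-sided) thick ideal of a monoidal triangulated category, encoded as a set of
objects closed under isomorphism, shifts, extensions (cones), direct summands (retracts),
and tensoring on both sides by arbitrary objects. -/
structure ThickIdeal where
  carrier : Set K
  zero_mem : (0 : K) ∈ carrier
  iso_mem : ∀ {A B : K}, (A ≅ B) → A ∈ carrier → B ∈ carrier
  shift_mem : ∀ (A : K) (n : ℤ), A ∈ carrier → A⟦n⟧ ∈ carrier
  ext_mem : ∀ T ∈ (distTriang K), T.obj₁ ∈ carrier → T.obj₂ ∈ carrier → T.obj₃ ∈ carrier
  retract_mem : ∀ (A X : K), A ∈ carrier → ∀ (i : X ⟶ A) (r : A ⟶ X), i ≫ r = 𝟙 X → X ∈ carrier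
  tensor_left_mem : ∀ (A : K), A ∈ carrier → ∀ (B : K), A ⊗ B ∈ carrier
  tensor_right_mem : ∀ (A : K), A ∈ carrier → ∀ (B : K), B ⊗ A ∈ carrier

variable (G : Type*) [Group G]

/-- An action of a group `G` on a monoidal triangulated category `K`: monoidal triangulated
autoequivalences `T g` together with coherent natural isomorphisms `γ g h : T g ∘ T h ≅ T (g*h)`. -/
structure MTAction where
  T : G → K ⥤ K
  additive : ∀ g, (T g).Additive
  equivalence : ∀ g, (T g).IsEquivalence
  /-- monoidal structure isomorphisms of each `T g` -/
  μ : ∀ (g : G) (A B : K), (T g).obj A ⊗ (T g).obj B ≅ (T g).obj (A ⊗ B)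
  μ_natural : ∀ (g : G) {A A' B B' : K} (f : A ⟶ A') (f' : B ⟶ B'),
      ((T g).map f ⊗ₘ (T g).map f') ≫ (μ g A' B').hom = (μ g A B).hom ≫ (T g).map (f ⊗ₘ f')
  ε : ∀ g : G, 𝟙_ K ≅ (T g).obj (𝟙_ K)
  μ_assoc : ∀ (g : G) (A B C : K),
      ((μ g A B).hom ⊗ₘ 𝟙 ((T g).obj C)) ≫ (μ g (A ⊗ B) C).hom ≫ (T g).map (α_ A B C).hom =
        (α_ ((T g).obj A) ((T g).obj B) ((T g).obj C)).hom ≫ (𝟙 ((T g).obj A) ⊗ₘ (μ g B C).hom) ≫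
          (μ g A (B ⊗ C)).hom
  left_unitality : ∀ (g : G) (A : K),
      (λ_ ((T g).obj A)).hom =
        ((ε g).hom ⊗ₘ 𝟙 ((T g).obj A)) ≫ (μ g (𝟙_ K) A).hom ≫ (T g).map (λ_ A).hom
  right_unitality : ∀ (g : G) (A : K),
      (ρ_ ((T g).obj A)).hom =
        (𝟙 ((T g).obj A) ⊗ₘ (ε g).hom) ≫ (μ g A (𝟙_ K)).hom ≫ (T g).map (ρ_ A).hom
  /-- each `T g` commutes with the shift -/
  shiftIso : ∀ (g : G) (n : ℤ), shiftFunctor K n ⋙ T g ≅ T g ⋙ shiftFunctor K n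
  /-- each `T g` is triangulated: it sends distinguished triangles to distinguished triangles -/
  map_distinguished : ∀ (g : G), ∀ T' ∈ (distTriang K),
      Triangle.mk ((T g).map T'.mor₁) ((T g).map T'.mor₂)
        ((T g).map T'.mor₃ ≫ (shiftIso g 1).hom.app T'.obj₁) ∈ (distTriang K)
  /-- the compositor isomorphisms of the action -/
  γ : ∀ g h : G, T h ⋙ T g ≅ T (g * h)
  γ_assoc : ∀ g h k : G,
      CategoryTheory.Functor.whiskerLeft (T k) (γ g h).hom ≫ (γ (g * h) k).hom =
        CategoryTheory.Functor.whiskerRight (γ h k).hom (T g) ≫ (γ g (h * k)).hom ≫ eqToHom (by rw [mul_assoc])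

variable {K G}

/-- The image `T_g I` of a collection of objects under `T g` (closed under isomorphism). -/
def MTAction.mapSet (act : MTAction K G) (g : G) (S : Set K) : Set K :=
  {B | ∃ A ∈ S, Nonempty ((act.T g).obj A ≅ B)}

/-- A `G`-ideal: a thick ideal invariant under the action. -/
def IsGIdeal (act : MTAction K G) (I : ThickIdeal K) : Prop :=
  ∀ (g : G) (A : K), A ∈ I.carrier → (act.T g).obj A ∈ I.carrier

/-- A prime thick ideal: a proper thick ideal `P` with `A ⊗ K ⊗ B ⊆ P ⟹ A ∈ P or B ∈ P`. -/
def ThickIdeal.IsPrime (P : ThickIdeal K) : Prop :=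
  P.carrier ≠ Set.univ ∧
    ∀ A B : K, (∀ C : K, A ⊗ C ⊗ B ∈ P.carrier) → A ∈ P.carrier ∨ B ∈ P.carrier

/-- A `G`-prime: a proper `G`-ideal `Q` such that `I ⊗ J ⊆ Q` implies `I ⊆ Q` or `J ⊆ Q`
for all `G`-ideals `I`, `J`. -/
def IsGPrime (act : MTAction K G) (Q : ThickIdeal K) : Prop :=
  IsGIdeal act Q ∧ Q.carrier ≠ Set.univ ∧
    ∀ I J : ThickIdeal K, IsGIdeal act I → IsGIdeal act J →
      (∀ A ∈ I.carrier, ∀ B ∈ J.carrier, A ⊗ B ∈ Q.carrier) →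
      I.carrier ⊆ Q.carrier ∨ J.carrier ⊆ Q.carrier

/-- The smallest thick ideal containing a collection of objects. -/
def ThickIdeal.generate (S : Set K) : ThickIdeal K where
  carrier := {A | ∀ I : ThickIdeal K, S ⊆ I.carrier → A ∈ I.carrier}
  zero_mem := fun I _ => I.zero_mem
  iso_mem := fun e hA I hI => I.iso_mem e (hA I hI)
  shift_mem := fun A n hA I hI => I.shift_mem A n (hA I hI)
  ext_mem := fun T hT h1 h2 I hI => I.ext_mem T hT (h1 I hI) (h2 I hI)
  retract_mem := fun A X hA i r hir I hI => I.retract_mem A X (hA I hI) i r hir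
  tensor_left_mem := fun A hA B I hI => I.tensor_left_mem A (hA I hI) B
  tensor_right_mem := fun A hA B I hI => I.tensor_right_mem A (hA I hI) B

variable (K) in
/-- The Balmer spectrum of `K`: the set of prime thick ideals. -/
def SpcPoint := {P : ThickIdeal K // P.IsPrime}

variable (K) in
/-- The Balmer topology on `Spc K`: closed sets are generated by the sets
`V(A) = {P : A ∉ P}`. -/
def spcTopology : TopologicalSpace (SpcPoint K) :=
  TopologicalSpace.generateFrom {U | ∃ A : K, U = {P : SpcPoint K | A ∈ P.1.carrier}}

variable (K) in
/-- `K` is half-rigid if every object has a left dual or every object has a right dual. -/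
def HalfRigid : Prop :=
  (∀ A : K, ∃ B : K, Nonempty (ExactPairing A B)) ∨
    (∀ A : K, ∃ B : K, Nonempty (ExactPairing B A))


/-- The preimage of a thick ideal under `T g` is a thick ideal. -/
def MTAction.preimageIdeal (act : MTAction K G) (g : G) (P : ThickIdeal K) : ThickIdeal K where
  carrier := {A | (act.T g).obj A ∈ P.carrier}
  zero_mem := by
    have := act.additive g
    exact P.iso_mem (act.T g).mapZeroObject.symm P.zero_mem
  iso_mem := fun e hA => P.iso_mem ((act.T g).mapIso e) hA
  shift_mem := fun A n hA =>
    P.iso_mem ((act.shiftIso g n).app A).symm (P.shift_mem _ n hA)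
  ext_mem := fun T' hT' h1 h2 =>
    P.ext_mem _ (act.map_distinguished g T' hT') h1 h2
  retract_mem := fun A X hA i r hir =>
    P.retract_mem _ _ hA ((act.T g).map i) ((act.T g).map r)
      (by rw [← (act.T g).map_comp, hir, (act.T g).map_id])
  tensor_left_mem := fun A hA B =>
    P.iso_mem (act.μ g A B) (P.tensor_left_mem _ hA _)
  tensor_right_mem := fun A hA B =>
    P.iso_mem (act.μ g B A) (P.tensor_right_mem _ hA _)

theorem MTAction.preimageIdeal_isPrime (act : MTAction K G) (g : G) (P : ThickIdeal K)
    (hP : P.IsPrime) : (act.preimageIdeal g P).IsPrime := by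
  have := act.equivalence g
  constructor
  · intro h
    apply hP.1
    ext B
    simp only [Set.mem_univ, iff_true]
    have hB : (act.T g).objPreimage B ∈ (act.preimageIdeal g P).carrier := by
      rw [h]; trivial
    exact P.iso_mem ((act.T g).objObjPreimageIso B) hB
  · intro A B hAB
    refine hP.2 ((act.T g).obj A) ((act.T g).obj B) (fun C' => ?_)
    set C := (act.T g).objPreimage C'
    have e1 : (act.T g).obj A ⊗ C' ⊗ (act.T g).obj B ≅ (act.T g).obj (A ⊗ C ⊗ B) :=
      (tensorIso (Iso.refl _)
        (tensorIso ((act.T g).objObjPreimageIso C').symm (Iso.refl _))) ≪≫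
      (tensorIso (Iso.refl _) (act.μ g C B)) ≪≫ act.μ g A (C ⊗ B)
    exact P.iso_mem e1.symm (hAB C)

theorem MTAction.mapSet_preimageIdeal (act : MTAction K G) (g : G) (P : ThickIdeal K) :
    P.carrier = act.mapSet g (act.preimageIdeal g P).carrier := by
  have := act.equivalence g
  ext B
  constructor
  · intro hB
    refine ⟨(act.T g).objPreimage B, ?_, ⟨(act.T g).objObjPreimageIso B⟩⟩
    exact P.iso_mem ((act.T g).objObjPreimageIso B).symm hB
  · rintro ⟨A, hA, ⟨e⟩⟩
    exact P.iso_mem e hA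

/-- If `I` is a semiprime thick ideal of `K` (an intersection of prime thick
ideals) whose support `Φ_V(I) = {P ∈ Spc K : I ⊄ P}` is `G`-invariant, then `I` is a
`G`-ideal. -/
theorem semiprime_gInvariant_support_isGIdeal (act : MTAction K G) (I : ThickIdeal K)
    (hsemi : ∃ SP : Set (ThickIdeal K), (∀ P ∈ SP, P.IsPrime) ∧
      I.carrier = ⋂ P ∈ SP, P.carrier)
    (hsupp : ∀ (g : G) (P Q : ThickIdeal K), P.IsPrime →
      Q.carrier = act.mapSet g P.carrier →
      (¬ I.carrier ⊆ P.carrier → ¬ I.carrier ⊆ Q.carrier)) :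
    IsGIdeal act I := by
  obtain ⟨SP, hSPprime, hI⟩ := hsemi
  intro g A hA
  rw [hI]
  simp only [Set.mem_iInter]
  intro P hP
  have hIP : I.carrier ⊆ P.carrier := by
    rw [hI]; exact Set.biInter_subset_of_mem hP
  have key : I.carrier ⊆ (act.preimageIdeal g P).carrier := by
    by_contra hcon
    exact hsupp g (act.preimageIdeal g P) P
      (act.preimageIdeal_isPrime g P (hSPprime P hP))
      (act.mapSet_preimageIdeal g P) (fun h => hcon h) hIP
  exact key hA
end

section
/- Let K be a half-rigid monoidal triangulated category with Noetherian Balmer spectrum, and let G act on K. If a prime thick ideal P satisfies T_g P ⊆ P for some g ∈ G, then T_g P = P. -/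
open CategoryTheory Category Limits Pretriangulated MonoidalCategory ZeroObject

universe v u

variable (K : Type u) [Category.{v} K] [Preadditive K] [HasZeroObject K]
  [MonoidalCategory K] [HasShift K ℤ] [∀ n : ℤ, (shiftFunctor K n).Additive]
  [Pretriangulated K]

variable (G : Type*) [Group G]

variable {K G}

namespace MTAction

variable (act : MTAction K G)

lemma mapSet_isoClosed (g : G) (S : Set K) {A B : K} (e : A ≅ B)
    (hA : A ∈ act.mapSet g S) : B ∈ act.mapSet g S := by
  obtain ⟨A', hA', ⟨e'⟩⟩ := hA
  exact ⟨A', hA', ⟨e' ≪≫ e⟩⟩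

lemma mapSet_mono (g : G) {S T : Set K} (h : S ⊆ T) :
    act.mapSet g S ⊆ act.mapSet g T := by
  rintro B ⟨A, hA, ⟨e⟩⟩
  exact ⟨A, h hA, ⟨e⟩⟩

lemma mapSet_comp (g h : G) (S : Set K) :
    act.mapSet g (act.mapSet h S) = act.mapSet (g * h) S := by
  ext B
  constructor
  · rintro ⟨A', ⟨A, hA, ⟨e'⟩⟩, ⟨e⟩⟩
    exact ⟨A, hA, ⟨((act.γ g h).symm.app A) ≪≫ (act.T g).mapIso e' ≪≫ e⟩⟩
  · rintro ⟨A, hA, ⟨e⟩⟩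
    exact ⟨(act.T h).obj A, ⟨A, hA, ⟨Iso.refl _⟩⟩, ⟨(act.γ g h).app A ≪≫ e⟩⟩

/-- `T 1` is isomorphic to the identity functor. -/
noncomputable def oneIso : act.T (1 : G) ≅ 𝟭 K := by
  haveI := act.equivalence (1 : G)
  let F := act.T (1 : G)
  let e : F ⋙ F ≅ F := act.γ 1 1 ≪≫ eqToIso (congrArg act.T (one_mul 1))
  exact F.rightUnitor.symm ≪≫ Functor.isoWhiskerLeft F F.asEquivalence.unitIso ≪≫
    (Functor.associator F F F.asEquivalence.inverse).symm ≪≫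
    Functor.isoWhiskerRight e F.asEquivalence.inverse ≪≫ F.asEquivalence.unitIso.symm

lemma mapSet_one (S : Set K)
    (hS : ∀ {A B : K}, (A ≅ B) → A ∈ S → B ∈ S) :
    act.mapSet (1 : G) S = S := by
  ext B
  constructor
  · rintro ⟨A, hA, ⟨e⟩⟩
    exact hS ((act.oneIso.app A).symm ≪≫ e) hA
  · intro hB
    exact ⟨B, hB, ⟨act.oneIso.app B⟩⟩

lemma mapSet_cancel {g : G} {S T : Set K}
    (hS : ∀ {A B : K}, (A ≅ B) → A ∈ S → B ∈ S)
    (hT : ∀ {A B : K}, (A ≅ B) → A ∈ T → B ∈ T)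
    (h : act.mapSet g S = act.mapSet g T) : S = T := by
  have := congrArg (act.mapSet g⁻¹) h
  rwa [act.mapSet_comp, act.mapSet_comp, inv_mul_cancel, act.mapSet_one S hS,
    act.mapSet_one T hT] at this

/-- Membership of `T g A` in `T g I` reflects membership of `A` in `I`. -/
lemma mem_of_obj_mem_mapSet (g : G) (I : ThickIdeal K) {A : K}
    (h : (act.T g).obj A ∈ act.mapSet g I.carrier) : A ∈ I.carrier := by
  haveI := act.equivalence g
  obtain ⟨A', hA', ⟨e⟩⟩ := h
  exact I.iso_mem ((act.T g).preimageIso e) hA'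

/-- The image of a thick ideal under `T g` is a thick ideal. -/
noncomputable def mapIdeal (g : G) (I : ThickIdeal K) : ThickIdeal K where
  carrier := act.mapSet g I.carrier
  zero_mem := by
    haveI := act.additive g
    exact ⟨0, I.zero_mem, ⟨((act.T g).map_isZero (isZero_zero K)).isoZero⟩⟩
  iso_mem := fun e h => act.mapSet_isoClosed g _ e h
  shift_mem := by
    rintro B n ⟨A, hA, ⟨e⟩⟩
    exact ⟨A⟦n⟧, I.shift_mem A n hA,
      ⟨(act.shiftIso g n).app A ≪≫ (shiftFunctor K n).mapIso e⟩⟩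
  ext_mem := by
    haveI := act.equivalence g
    rintro T' hT' ⟨A₁, hA₁, ⟨e₁⟩⟩ ⟨A₂, hA₂, ⟨e₂⟩⟩
    obtain ⟨f, hf⟩ := (act.T g).map_surjective (e₁.hom ≫ T'.mor₁ ≫ e₂.inv)
    obtain ⟨Z, u, v, hZ⟩ := Pretriangulated.distinguished_cocone_triangle f
    have hmap := act.map_distinguished g _ hZ
    have comm : (Triangle.mk ((act.T g).map (Triangle.mk f u v).mor₁)
        ((act.T g).map (Triangle.mk f u v).mor₂)
        ((act.T g).map (Triangle.mk f u v).mor₃ ≫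
          (act.shiftIso g 1).hom.app (Triangle.mk f u v).obj₁)).mor₁ ≫ e₂.hom =
        e₁.hom ≫ T'.mor₁ := by
      show (act.T g).map f ≫ e₂.hom = e₁.hom ≫ T'.mor₁
      rw [hf]
      simp
    have etri := Pretriangulated.isoTriangleOfIso₁₂ _ T' hmap hT' e₁ e₂ comm
    refine ⟨Z, I.ext_mem _ hZ hA₁ hA₂, ⟨?_⟩⟩
    exact Triangle.π₃.mapIso etri
  retract_mem := by
    haveI := act.equivalence g
    rintro B X ⟨A, hA, ⟨e⟩⟩ i r hir
    let E := (act.T g).asEquivalence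
    refine ⟨E.inverse.obj X, ?_, ⟨E.counitIso.app X⟩⟩
    have hA' : E.inverse.obj B ∈ I.carrier :=
      I.iso_mem (E.inverse.mapIso e.symm ≪≫ (E.unitIso.app A).symm).symm hA
    refine I.retract_mem (E.inverse.obj B) (E.inverse.obj X) hA'
      (E.inverse.map i) (E.inverse.map r) ?_
    rw [← E.inverse.map_comp, hir, E.inverse.map_id]
  tensor_left_mem := by
    haveI := act.equivalence g
    rintro B ⟨A, hA, ⟨e⟩⟩ C
    refine ⟨A ⊗ (act.T g).objPreimage C, I.tensor_left_mem A hA _, ?_⟩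
    exact ⟨(act.μ g A _).symm ≪≫
      tensorIso e ((act.T g).objObjPreimageIso C)⟩
  tensor_right_mem := by
    haveI := act.equivalence g
    rintro B ⟨A, hA, ⟨e⟩⟩ C
    refine ⟨(act.T g).objPreimage C ⊗ A, I.tensor_right_mem A hA _, ?_⟩
    exact ⟨(act.μ g _ A).symm ≪≫
      tensorIso ((act.T g).objObjPreimageIso C) e⟩

lemma mapIdeal_isPrime (g : G) {P : ThickIdeal K} (hP : P.IsPrime) :
    (act.mapIdeal g P).IsPrime := by
  haveI := act.equivalence g
  constructor
  · intro h
    obtain ⟨A, hA⟩ := (Set.ne_univ_iff_exists_notMem _).mp hP.1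
    have hmem : (act.T g).obj A ∈ (act.mapIdeal g P).carrier := h ▸ Set.mem_univ _
    exact hA (act.mem_of_obj_mem_mapSet g P hmem)
  · intro A B hAB
    set A₀ := (act.T g).objPreimage A with hA₀
    set B₀ := (act.T g).objPreimage B with hB₀
    have key : ∀ C : K, A₀ ⊗ C ⊗ B₀ ∈ P.carrier := by
      intro C
      apply act.mem_of_obj_mem_mapSet g P
      have : (act.T g).obj (A₀ ⊗ C ⊗ B₀) ≅ A ⊗ (act.T g).obj C ⊗ B :=
        (act.μ g A₀ (C ⊗ B₀)).symm ≪≫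
          tensorIso ((act.T g).objObjPreimageIso A)
            ((act.μ g C B₀).symm ≪≫
              tensorIso (Iso.refl _) ((act.T g).objObjPreimageIso B))
      exact act.mapSet_isoClosed g P.carrier this.symm (hAB ((act.T g).obj C))
    rcases hP.2 A₀ B₀ key with h | h
    · exact Or.inl ⟨A₀, h, ⟨(act.T g).objObjPreimageIso A⟩⟩
    · exact Or.inr ⟨B₀, h, ⟨(act.T g).objObjPreimageIso B⟩⟩

end MTAction

section ClosureLemma

lemma spc_mem_closure_singleton (Q Q' : SpcPoint K) :
    Q' ∈ @closure _ (spcTopology K) {Q} ↔ Q'.1.carrier ⊆ Q.1.carrier := by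
  letI := spcTopology K
  rw [mem_closure_iff]
  constructor
  · intro h A hA
    have hopen : IsOpen {P : SpcPoint K | A ∈ P.1.carrier} :=
      TopologicalSpace.isOpen_generateFrom_of_mem ⟨A, rfl⟩
    obtain ⟨x, hx, hx'⟩ := h _ hopen hA
    rw [Set.mem_singleton_iff] at hx'
    subst hx'
    exact hx
  · intro hsub o ho hQ'
    suffices h : Q ∈ o by exact ⟨Q, h, rfl⟩
    induction ho with
    | basic U hU =>
      obtain ⟨A, rfl⟩ := hU
      exact hsub hQ'
    | univ => trivial
    | inter U V _ _ ihU ihV => exact ⟨ihU hQ'.1, ihV hQ'.2⟩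
    | sUnion S _ ih =>
      obtain ⟨t, ht, hQt⟩ := hQ'
      exact ⟨t, ht, ih t ht hQt⟩

end ClosureLemma

/-- Let `K` be a half-rigid monoidal triangulated category with Noetherian
Balmer spectrum. If a prime thick ideal `P` satisfies `T_g P ⊆ P` for some `g ∈ G`, then
`T_g P = P`. -/
theorem prime_mapSet_subset_eq (act : MTAction K G) (hR : HalfRigid K)
    (hN : @TopologicalSpace.NoetherianSpace (SpcPoint K) (spcTopology K))
    (P : ThickIdeal K) (hP : P.IsPrime)
    (g : G) (hsub : act.mapSet g P.carrier ⊆ P.carrier) :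
    act.mapSet g P.carrier = P.carrier := by
    classical
  letI := spcTopology K
  haveI := hN
  by_contra hne
  -- the descending chain of prime ideals
  let Q : ℕ → ThickIdeal K := fun n => Nat.rec P (fun _ I => act.mapIdeal g I) n
  have hQ0 : Q 0 = P := rfl
  have hQsucc : ∀ n, Q (n + 1) = act.mapIdeal g (Q n) := fun n => rfl
  have hQprime : ∀ n, (Q n).IsPrime := by
    intro n
    induction n with
    | zero => exact hP
    | succ n ih => exact act.mapIdeal_isPrime g ih
  have hQsub : ∀ n, (Q (n + 1)).carrier ⊆ (Q n).carrier := by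
    intro n
    induction n with
    | zero => exact hsub
    | succ n ih => exact act.mapSet_mono g ih
  -- if two consecutive carriers agree, then the original inclusion is an equality
  have hcancel : ∀ n, act.mapSet g (Q n).carrier = (Q n).carrier →
      act.mapSet g P.carrier = P.carrier := by
    intro n
    induction n with
    | zero => exact fun h => h
    | succ n ih =>
      intro h
      apply ih
      exact act.mapSet_cancel (fun e hh => act.mapSet_isoClosed g _ e hh)
        (fun e hh => (Q n).iso_mem e hh) h
  -- the chain of closed sets
  let Qpt : ℕ → SpcPoint K := fun n => ⟨Q n, hQprime n⟩
  let f : ℕ → TopologicalSpace.Closeds (SpcPoint K) :=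
    fun n => ⟨closure {Qpt n}, isClosed_closure⟩
  have hstrict : ∀ n, f (n + 1) < f n := by
    intro n
    have hle : f (n + 1) ≤ f n := by
      change closure {Qpt (n + 1)} ⊆ closure {Qpt n}
      apply closure_minimal _ isClosed_closure
      intro x hx
      rw [Set.mem_singleton_iff] at hx
      subst hx
      exact (spc_mem_closure_singleton (Qpt n) (Qpt (n + 1))).mpr (hQsub n)
    refine lt_of_le_of_ne hle ?_
    intro heq
    have hmem : Qpt n ∈ closure {Qpt (n + 1)} := by
      have : Qpt n ∈ closure {Qpt n} := subset_closure rfl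
      have hsets : closure ({Qpt (n+1)} : Set (SpcPoint K)) = closure {Qpt n} :=
        congrArg TopologicalSpace.Closeds.carrier heq
      rw [hsets]
      exact this
    have h1 : (Q n).carrier ⊆ (Q (n + 1)).carrier :=
      (spc_mem_closure_singleton (Qpt (n + 1)) (Qpt n)).mp hmem
    have heqcar : act.mapSet g (Q n).carrier = (Q n).carrier :=
      le_antisymm (hQsub n) h1
    exact hne (hcancel n heqcar)
  -- contradiction with well-foundedness
  obtain ⟨m, ⟨n, rfl⟩, hmin⟩ :=
    (wellFounded_lt (α := TopologicalSpace.Closeds (SpcPoint K))).has_min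
      (Set.range f) ⟨f 0, 0, rfl⟩
  exact hmin (f (n + 1)) ⟨n + 1, rfl⟩ (hstrict n)
end
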